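/- arXiv:2309.14039 — 2 statements merged into one kernel-verified Lean document; each statement's English description precedes it below -/
import Mathlib

section
/- Let a spanning forest G of a superport network and a partition of the boundary set M into subsets X, Y, Z, W satisfy conditions (1)–(3). Let e_1,…,e_n be a sequence of oriented edges forming a simple oriented cycle in the quotient graph G/∼, and suppose the union e_1 ∪ … ∪ e_n splits in G into disjoint paths u_1…v_1, …, u_l…v_l in the cyclic order in which they appear along the cycle. Then, after possibly reversing the direction of the cycle, one of the following holds: (XY) u_k ∈ X and v_k ∈ Y for every k = 1,…,l; or (ZW) u_k ∈ Z and v_k ∈ W for every k = 1,…,l. -/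
open Finset BigOperators
open scoped Classical

namespace Superport

/-- A superport network: a finite connected simple graph on `Fin n` with conductances `c`
and `p` nonempty pairwise disjoint superports `A 0, …, A (p-1)` occupying the initial
segment of the vertices, ordered consecutively. -/
structure Network where
  n : ℕ
  p : ℕ
  graph : SimpleGraph (Fin n)
  c : Fin n → Fin n → ℝ
  A : Fin p → Finset (Fin n)
  p_pos : 0 < p
  connected : graph.Connected
  c_symm : ∀ k l, c k l = c l k
  c_pos : ∀ k l, graph.Adj k l → 0 < c k l
  c_zero : ∀ k l, ¬ graph.Adj k l → c k l = 0
  A_nonempty : ∀ i, (A i).Nonempty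
  A_disjoint : ∀ i j, i ≠ j → Disjoint (A i) (A j)
  A_ordered : ∀ i j u v, i < j → u ∈ A i → v ∈ A j → u < v
  boundary_initial : ∀ v : Fin n, (∃ i, v ∈ A i) ↔ (v : ℕ) < ∑ i, (A i).card

namespace Network

variable (N : Network)

/-- The set of boundary vertices. -/
def M : Finset (Fin N.n) := Finset.univ.biUnion N.A

/-- The number of boundary vertices. -/
def m : ℕ := N.M.card

theorem mem_M_iff {v : Fin N.n} : v ∈ N.M ↔ ∃ i, v ∈ N.A i := by
  simp [M, Finset.mem_biUnion]

/-- The root of the superport of a boundary vertex `v` (the vertex of maximal number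
in the superport containing `v`); for interior `v` we set `root v = v`. -/
noncomputable def root (v : Fin N.n) : Fin N.n :=
  if h : ∃ i, v ∈ N.A i then (N.A h.choose).max' ⟨v, h.choose_spec⟩ else v

/-- The index of the last superport. -/
def lastPort : Fin N.p := ⟨N.p - 1, Nat.sub_lt N.p_pos Nat.one_pos⟩

theorem M_nonempty : N.M.Nonempty := by
  obtain ⟨v, hv⟩ := N.A_nonempty N.lastPort
  exact ⟨v, N.mem_M_iff.mpr ⟨N.lastPort, hv⟩⟩

theorem root_mem {v : Fin N.n} (hv : v ∈ N.M) : N.root v ∈ N.M := by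
  have h : ∃ i, v ∈ N.A i := N.mem_M_iff.mp hv
  rw [root, dif_pos h]
  exact N.mem_M_iff.mpr ⟨h.choose, (N.A h.choose).max'_mem _⟩

theorem root_eq_self_of_max {v : Fin N.n} (hv : v ∈ N.M) (hmax : ∀ u ∈ N.M, u ≤ v) :
    N.root v = v := by
  have h : ∃ i, v ∈ N.A i := N.mem_M_iff.mp hv
  rw [root, dif_pos h]
  exact le_antisymm (hmax _ (N.mem_M_iff.mpr ⟨h.choose, (N.A h.choose).max'_mem _⟩))
    (Finset.le_max' _ _ h.choose_spec)

/-- Axioms (C), (I), (P), (B) for voltages `U`, currents `I`, and prescribed voltage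
differences `ΔU` (only the values of `ΔU` at non-root boundary vertices are relevant). -/
def Axioms (ΔU U : Fin N.n → ℝ) (I : Fin N.n → Fin N.n → ℝ) : Prop :=
  (∀ k l, I k l = N.c k l * (U k - U l)) ∧
  (∀ k, k ∉ N.M → ∑ l, I k l = 0) ∧
  (∀ i : Fin N.p, i ≠ N.lastPort → ∑ k ∈ N.A i, ∑ l, I k l = 0) ∧
  (∀ k, k ∈ N.M → N.root k ≠ k → U k - U (N.root k) = ΔU k)

/-- The weight of a subgraph: the product of the conductances of its edges. -/
noncomputable def weight (H : SimpleGraph (Fin N.n)) : ℝ :=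
  ∏ e ∈ (Set.toFinite H.edgeSet).toFinset, Sym2.lift ⟨N.c, N.c_symm⟩ e

/-- The number of edges of a subgraph. -/
noncomputable def edgeCount (H : SimpleGraph (Fin N.n)) : ℕ :=
  (Set.toFinite H.edgeSet).toFinset.card

/-- Two vertices lie in a common superport. -/
def samePort (u v : Fin N.n) : Prop := ∃ i, u ∈ N.A i ∧ v ∈ N.A i

/-- The `X`-equivalence: two boundary vertices not in `X` are equivalent iff they lie in
the same superport; each interior vertex and each vertex of `X` forms a singleton class.
For `X = ∅` this is the equivalence relation `∼`. -/
def xSetoid (X : Set (Fin N.n)) : Setoid (Fin N.n) where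
  r u v := u = v ∨ (u ∉ X ∧ v ∉ X ∧ N.samePort u v)
  iseqv := by
    constructor
    · intro u; exact Or.inl rfl
    · rintro u v (rfl | ⟨hu, hv, i, hui, hvi⟩)
      · exact Or.inl rfl
      · exact Or.inr ⟨hv, hu, i, hvi, hui⟩
    · rintro u v w huv hvw
      rcases huv with rfl | ⟨hu, hv, i, hui, hvi⟩
      · exact hvw
      rcases hvw with rfl | ⟨hv', hw, j, hvj, hwj⟩
      · exact Or.inr ⟨hu, hv, i, hui, hvi⟩
      · have hij : i = j := by
          by_contra hij
          exact (Finset.disjoint_left.mp (N.A_disjoint i j hij) hvi) hvj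
        exact Or.inr ⟨hu, hw, i, hui, hij ▸ hwj⟩

/-- The quotient of a graph `H` by an equivalence relation `s`: classes `a ≠ b` are
adjacent iff some representatives are adjacent in `H`. -/
def quotGraph (H : SimpleGraph (Fin N.n)) (s : Setoid (Fin N.n)) :
    SimpleGraph (Quotient s) where
  Adj a b := a ≠ b ∧ ∃ u v, H.Adj u v ∧ Quotient.mk s u = a ∧ Quotient.mk s v = b
  symm := by
    constructor
    rintro a b ⟨hab, u, v, huv, hu, hv⟩
    exact ⟨hab.symm, v, u, huv.symm, hv, hu⟩
  loopless := by
    constructor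
    rintro a ⟨hab, -⟩
    exact hab rfl

/-- A spanning forest of the network. -/
def IsSpanningForest (H : SimpleGraph (Fin N.n)) : Prop := H ≤ N.graph ∧ H.IsAcyclic

/-- A spanning forest becomes a spanning tree in the quotient by the `X`-equivalence
(in the multigraph sense): the quotient is connected and the number of edges of the
forest is one less than the number of equivalence classes.  For `X = {i}` this is
"valid relative to the vertex `i`"; for `X = ∅` this is "valid". -/
def IsValidRel (X : Set (Fin N.n)) (H : SimpleGraph (Fin N.n)) : Prop :=
  N.IsSpanningForest H ∧ (N.quotGraph H (N.xSetoid X)).Connected ∧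
    N.edgeCount H + 1 = Nat.card (Quotient (N.xSetoid X))

/-- A valid forest: a spanning forest which becomes a spanning tree in the quotient
by the equivalence `∼`. -/
def IsValidForest (H : SimpleGraph (Fin N.n)) : Prop := N.IsValidRel ∅ H

/-- The sign `sgn(H, i, j)` of a spanning forest `H` with respect to vertices `i, j`. -/
noncomputable def sgnIJ (H : SimpleGraph (Fin N.n)) (i j : Fin N.n) : ℝ :=
  if i = j ∨ ¬ (N.quotGraph H (N.xSetoid {i, j})).Reachable
      (Quotient.mk (N.xSetoid {i, j}) i) (Quotient.mk (N.xSetoid {i, j}) j)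
  then 1 else -1

/-- The type of non-root boundary vertices. -/
abbrev NonRoot := {v : Fin N.n // v ∈ N.M ∧ N.root v ≠ v}

/-- The type of boundary vertices. -/
abbrev Bdry := {v : Fin N.n // v ∈ N.M}

/-- `L` is the response matrix of the superport network: for any admissible voltages and
currents, the incoming currents at the non-root boundary vertices are obtained from the
prescribed voltage differences by multiplication by `L`. -/
def IsResponse (L : Matrix N.NonRoot N.NonRoot ℝ) : Prop :=
  ∀ (ΔU U : Fin N.n → ℝ) (I : Fin N.n → Fin N.n → ℝ), N.Axioms ΔU U I →
    ∀ x : N.NonRoot, (∑ l, I x.1 l) = ∑ y : N.NonRoot, L x y * ΔU y.1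

/-- `C` is the response matrix of the electrical network obtained by unifying all the
superports: same graph and conductances, boundary vertices `M`; axioms (C) and (I). -/
def IsElecResponse (C : Matrix N.Bdry N.Bdry ℝ) : Prop :=
  ∀ (Ub : N.Bdry → ℝ) (U : Fin N.n → ℝ) (I : Fin N.n → Fin N.n → ℝ),
    (∀ k l, I k l = N.c k l * (U k - U l)) →
    (∀ k, k ∉ N.M → ∑ l, I k l = 0) →
    (∀ v : N.Bdry, U v.1 = Ub v) →
    ∀ v : N.Bdry, (∑ l, I v.1 l) = ∑ u : N.Bdry, C v u * Ub u

/-- The sum of the weights of all valid forests. -/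
noncomputable def validForestSum : ℝ :=
  ∑ H ∈ Finset.univ.filter (fun H => N.IsValidForest H), N.weight H

end Network
end Superport

namespace Superport
namespace Network

variable (N : Network)

/-- The vertex set of the connected component `comp` of a subgraph `H`. -/
noncomputable def compFinset (H : SimpleGraph (Fin N.n)) (comp : H.ConnectedComponent) :
    Finset (Fin N.n) :=
  Finset.univ.filter (fun v => H.connectedComponentMk v = comp)

/-- Conditions (1)–(3) of Lemma 8.4 on a spanning forest `H` and a partition of the
boundary set `M` into four subsets `X, Y, Z, W`:
(1) the last superport is contained in `W`;
(2) every other superport meets `X` and `Y` in sets of equal cardinality `0` or `1`,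
    complementary to its intersection with `Z`;
(3) every component of `H` meets `X` and `Y` in sets of equal cardinality `0` or `1`,
    complementary to its intersection with `W`. -/
def Cond123 (H : SimpleGraph (Fin N.n)) (X Y Z W : Finset (Fin N.n)) : Prop :=
  (X ∪ Y ∪ Z ∪ W = N.M) ∧
  Disjoint X Y ∧ Disjoint X Z ∧ Disjoint X W ∧
  Disjoint Y Z ∧ Disjoint Y W ∧ Disjoint Z W ∧
  (N.A N.lastPort ⊆ W) ∧
  (∀ k : Fin N.p, k ≠ N.lastPort →
    (X ∩ N.A k).card = (Y ∩ N.A k).card ∧ (X ∩ N.A k).card + (Z ∩ N.A k).card = 1) ∧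
  (∀ comp : H.ConnectedComponent,
    (X ∩ N.compFinset H comp).card = (Y ∩ N.compFinset H comp).card ∧
    (X ∩ N.compFinset H comp).card + (W ∩ N.compFinset H comp).card = 1)

/-- The signed sum `Σ_{(X,Y,Z,W,G)} sgn(G,X,Y,Z,W)·w(G)` over all spanning forests `G`
and partitions `X ⊔ Y ⊔ Z ⊔ W = M` satisfying conditions (1)–(3).  The sign
`(−1)^{|X|}·sgn(σ∘τ)` is expressed via the (unique, whenever conditions (1)–(3) hold)
bijections `σ : X → Y` matching vertices in the same component of `G` and `τ : Y → X`
matching vertices in the same superport; summation over `σ` and `τ` subject to these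
properties produces exactly the term `sgn(G,X,Y,Z,W)·w(G)`. -/
noncomputable def signedTupleSum : ℝ :=
  ∑ H ∈ Finset.univ.filter (fun H => N.IsSpanningForest H),
    ∑ X ∈ N.M.powerset, ∑ Y ∈ N.M.powerset, ∑ Z ∈ N.M.powerset, ∑ W ∈ N.M.powerset,
      if N.Cond123 H X Y Z W then
        (∑ σ ∈ Finset.univ.filter (fun σ : {x // x ∈ X} ≃ {y // y ∈ Y} =>
              ∀ x, H.Reachable x.1 (σ x).1),
          ∑ τ ∈ Finset.univ.filter (fun τ : {y // y ∈ Y} ≃ {x // x ∈ X} =>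
              ∀ y, N.samePort y.1 (τ y).1),
            (-1 : ℝ) ^ X.card * ((Equiv.Perm.sign (τ.trans σ) : ℤ) : ℝ)) * N.weight H
      else 0

end Network
end Superport

namespace Superport

/-- **Lemma 8.7 (the cycle lemma)**.  Let a spanning forest `H` and a partition
`X ⊔ Y ⊔ Z ⊔ W = M` satisfy conditions (1)–(3).  Suppose a simple oriented cycle in the
quotient `H/∼` splits in `H` into pairwise disjoint nontrivial paths
`u 0 … v 0, u 1 … v 1, …` (indexed cyclically by `ZMod l`), so that consecutive endpoints
`v k` and `u (k+1)` are distinct vertices of one superport and the junction classes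
`[v k]` are pairwise distinct.  Then, up to the reversal of the cycle direction, either
all `u k ∈ X` and all `v k ∈ Y`, or all `u k ∈ Z` and all `v k ∈ W`. -/
theorem cycle_lemma (N : Network) (H : SimpleGraph (Fin N.n))
    (hH : N.IsSpanningForest H) (X Y Z W : Finset (Fin N.n))
    (hc : N.Cond123 H X Y Z W)
    (l : ℕ) (hl : 0 < l) (u v : ZMod l → Fin N.n)
    (P : ∀ k, H.Walk (u k) (v k))
    (hpath : ∀ k, (P k).IsPath)
    (hlen : ∀ k, 0 < (P k).length)
    (hdisj : ∀ k k', k ≠ k' → ∀ x ∈ (P k).support, x ∉ (P k').support)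
    (hport : ∀ k, N.samePort (v k) (u (k + 1)))
    (hne : ∀ k, v k ≠ u (k + 1))
    (hjunction : ∀ k k' : ZMod l,
      Quotient.mk (N.xSetoid ∅) (v k) = Quotient.mk (N.xSetoid ∅) (v k') → k = k') :
    (∀ k, u k ∈ X ∧ v k ∈ Y) ∨ (∀ k, v k ∈ X ∧ u k ∈ Y) ∨
    (∀ k, u k ∈ Z ∧ v k ∈ W) ∨ (∀ k, v k ∈ Z ∧ u k ∈ W) := by
  classical
  haveI : NeZero l := ⟨hl.ne'⟩
  obtain ⟨hUnion, hXY, hXZ, hXW, hYZ, hYW, hZWd, hlast, hports, hcomps⟩ := hc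
  -- endpoints of each path are distinct
  have huv : ∀ k, u k ≠ v k := by
    intro k h
    have h0 : ((P k).copy h rfl) = SimpleGraph.Walk.nil :=
      (SimpleGraph.Walk.isPath_iff_eq_nil : ((P k).copy h rfl).IsPath ↔ _).mp
        (by rw [SimpleGraph.Walk.isPath_copy]; exact hpath k)
    have h1 := hlen k
    rw [← SimpleGraph.Walk.length_copy (P k) h rfl, h0] at h1
    simp at h1
  -- boundary membership
  have hvA : ∀ k, ∃ i, v k ∈ N.A i := fun k => ⟨(hport k).choose, (hport k).choose_spec.1⟩
  have huA : ∀ k, ∃ i, u k ∈ N.A i := by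
    intro k
    obtain ⟨i, _, hu⟩ := hport (k - 1)
    rw [sub_add_cancel] at hu
    exact ⟨i, hu⟩
  have huM : ∀ k, u k ∈ N.M := fun k => N.mem_M_iff.mpr (huA k)
  have hvM : ∀ k, v k ∈ N.M := fun k => N.mem_M_iff.mpr (hvA k)
  -- classification of boundary vertices
  have hclass : ∀ w, w ∈ N.M → w ∈ X ∨ w ∈ Y ∨ w ∈ Z ∨ w ∈ W := by
    intro w hw
    rw [← hUnion] at hw
    simpa [Finset.mem_union, or_assoc] using hw
  -- generic counting helpers
  have uniq : ∀ S T : Finset (Fin N.n), (S ∩ T).card ≤ 1 →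
      ∀ a b, a ∈ S → a ∈ T → b ∈ S → b ∈ T → a = b := by
    intro S T hle a b ha ha' hb hb'
    exact Finset.card_le_one.mp hle a (Finset.mem_inter.mpr ⟨ha, ha'⟩)
      b (Finset.mem_inter.mpr ⟨hb, hb'⟩)
  have excl : ∀ S T : Finset (Fin N.n), (S ∩ T).card = 0 → ∀ a, a ∈ T → a ∉ S := by
    intro S T h0 a ha' ha
    have : a ∈ S ∩ T := Finset.mem_inter.mpr ⟨ha, ha'⟩
    rw [Finset.card_eq_zero] at h0
    simp [h0] at this
  have one : ∀ S T : Finset (Fin N.n), ∀ a, a ∈ S → a ∈ T → 1 ≤ (S ∩ T).card := by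
    intro S T a ha ha'
    exact Finset.card_pos.mpr ⟨a, Finset.mem_inter.mpr ⟨ha, ha'⟩⟩
  -- membership in components
  have hucomp : ∀ k, u k ∈ N.compFinset H (H.connectedComponentMk (u k)) := by
    intro k
    simp only [Network.compFinset, Finset.mem_filter, Finset.mem_univ, true_and]
  have hvcomp : ∀ k, v k ∈ N.compFinset H (H.connectedComponentMk (u k)) := by
    intro k
    simp only [Network.compFinset, Finset.mem_filter, Finset.mem_univ, true_and]
    exact (SimpleGraph.ConnectedComponent.sound (P k).reachable).symm
  -- PORT facts
  have portZ : ∀ k, v k ∈ Z → u (k + 1) ∈ W := by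
    intro k hvZ
    obtain ⟨i, hvi, hui⟩ := hport k
    have hiL : i ≠ N.lastPort := by
      rintro rfl
      exact (Finset.disjoint_left.mp hZWd hvZ) (hlast hvi)
    obtain ⟨hXYc, hXZc⟩ := hports i hiL
    have hZ1 := one Z (N.A i) _ hvZ hvi
    have hX0 : (X ∩ N.A i).card = 0 := by omega
    have hY0 : (Y ∩ N.A i).card = 0 := by omega
    have hZle : (Z ∩ N.A i).card ≤ 1 := by
      by_contra hgt
      push_neg at hgt
      have h2 : 2 ≤ (Z ∩ N.A i).card := hgt
      omega
    rcases hclass _ (huM (k + 1)) with h | h | h | h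
    · exact absurd h (excl X (N.A i) hX0 _ hui)
    · exact absurd h (excl Y (N.A i) hY0 _ hui)
    · exact absurd (uniq Z (N.A i) hZle _ _ hvZ hvi h hui) (hne k)
    · exact h
  have portZback : ∀ k, u (k + 1) ∈ Z → v k ∈ W := by
    intro k huZ
    obtain ⟨i, hvi, hui⟩ := hport k
    have hiL : i ≠ N.lastPort := by
      rintro rfl
      exact (Finset.disjoint_left.mp hZWd huZ) (hlast hui)
    obtain ⟨hXYc, hXZc⟩ := hports i hiL
    have hZ1 := one Z (N.A i) _ huZ hui
    have hX0 : (X ∩ N.A i).card = 0 := by omega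
    have hY0 : (Y ∩ N.A i).card = 0 := by omega
    have hZle : (Z ∩ N.A i).card ≤ 1 := by omega
    rcases hclass _ (hvM k) with h | h | h | h
    · exact absurd h (excl X (N.A i) hX0 _ hvi)
    · exact absurd h (excl Y (N.A i) hY0 _ hvi)
    · exact absurd (uniq Z (N.A i) hZle _ _ h hvi huZ hui) (hne k)
    · exact h
  have portY : ∀ k, v k ∈ Y → u (k + 1) ∉ Y ∧ u (k + 1) ∉ Z := by
    intro k hvY
    obtain ⟨i, hvi, hui⟩ := hport k
    have hiL : i ≠ N.lastPort := by
      rintro rfl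
      exact (Finset.disjoint_left.mp hYW hvY) (hlast hvi)
    obtain ⟨hXYc, hXZc⟩ := hports i hiL
    have hY1 := one Y (N.A i) _ hvY hvi
    have hZ0 : (Z ∩ N.A i).card = 0 := by omega
    have hYle : (Y ∩ N.A i).card ≤ 1 := by omega
    constructor
    · intro h
      exact hne k (uniq Y (N.A i) hYle _ _ hvY hvi h hui)
    · exact excl Z (N.A i) hZ0 _ hui
  have portX : ∀ k, v k ∈ X → u (k + 1) ∉ X ∧ u (k + 1) ∉ Z := by
    intro k hvX
    obtain ⟨i, hvi, hui⟩ := hport k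
    have hiL : i ≠ N.lastPort := by
      rintro rfl
      exact (Finset.disjoint_left.mp hXW hvX) (hlast hvi)
    obtain ⟨hXYc, hXZc⟩ := hports i hiL
    have hX1 := one X (N.A i) _ hvX hvi
    have hZ0 : (Z ∩ N.A i).card = 0 := by omega
    have hXle : (X ∩ N.A i).card ≤ 1 := by omega
    constructor
    · intro h
      exact hne k (uniq X (N.A i) hXle _ _ hvX hvi h hui)
    · exact excl Z (N.A i) hZ0 _ hui
  -- COMPONENT facts
  have compW : ∀ k, u k ∈ W → v k ∈ Z := by
    intro k huW
    obtain ⟨hXYc, hXWc⟩ := hcomps (H.connectedComponentMk (u k))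
    have hW1 := one W _ _ huW (hucomp k)
    have hX0 : (X ∩ N.compFinset H (H.connectedComponentMk (u k))).card = 0 := by omega
    have hY0 : (Y ∩ N.compFinset H (H.connectedComponentMk (u k))).card = 0 := by omega
    have hWle : (W ∩ N.compFinset H (H.connectedComponentMk (u k))).card ≤ 1 := by omega
    rcases hclass _ (hvM k) with h | h | h | h
    · exact absurd h (excl X _ hX0 _ (hvcomp k))
    · exact absurd h (excl Y _ hY0 _ (hvcomp k))
    · exact h
    · exact absurd (uniq W _ hWle _ _ huW (hucomp k) h (hvcomp k)) (huv k)
  have compWv : ∀ k, v k ∈ W → u k ∈ Z := by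
    intro k hvW
    obtain ⟨hXYc, hXWc⟩ := hcomps (H.connectedComponentMk (u k))
    have hW1 := one W _ _ hvW (hvcomp k)
    have hX0 : (X ∩ N.compFinset H (H.connectedComponentMk (u k))).card = 0 := by omega
    have hY0 : (Y ∩ N.compFinset H (H.connectedComponentMk (u k))).card = 0 := by omega
    have hWle : (W ∩ N.compFinset H (H.connectedComponentMk (u k))).card ≤ 1 := by omega
    rcases hclass _ (huM k) with h | h | h | h
    · exact absurd h (excl X _ hX0 _ (hucomp k))
    · exact absurd h (excl Y _ hY0 _ (hucomp k))
    · exact h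
    · exact absurd (uniq W _ hWle _ _ h (hucomp k) hvW (hvcomp k)) (huv k)
  have compX : ∀ k, u k ∈ X → v k ∉ X ∧ v k ∉ W := by
    intro k huX
    obtain ⟨hXYc, hXWc⟩ := hcomps (H.connectedComponentMk (u k))
    have hX1 := one X _ _ huX (hucomp k)
    have hW0 : (W ∩ N.compFinset H (H.connectedComponentMk (u k))).card = 0 := by omega
    have hXle : (X ∩ N.compFinset H (H.connectedComponentMk (u k))).card ≤ 1 := by omega
    exact ⟨fun h => huv k (uniq X _ hXle _ _ huX (hucomp k) h (hvcomp k)),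
      excl W _ hW0 _ (hvcomp k)⟩
  have compY : ∀ k, u k ∈ Y → v k ∉ Y ∧ v k ∉ W := by
    intro k huY
    obtain ⟨hXYc, hXWc⟩ := hcomps (H.connectedComponentMk (u k))
    have hY1 := one Y _ _ huY (hucomp k)
    have hW0 : (W ∩ N.compFinset H (H.connectedComponentMk (u k))).card = 0 := by omega
    have hYle : (Y ∩ N.compFinset H (H.connectedComponentMk (u k))).card ≤ 1 := by omega
    exact ⟨fun h => huv k (uniq Y _ hYle _ _ huY (hucomp k) h (hvcomp k)),
      excl W _ hW0 _ (hvcomp k)⟩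
  -- surjectivity of cyclic shifts
  have hsurjF : ∀ k0 k : ZMod l, ∃ j : ℕ, k = k0 + (j : ZMod l) := by
    intro k0 k
    exact ⟨(k - k0).val, by rw [ZMod.natCast_rightInverse (k - k0)]; ring⟩
  have hsurjB : ∀ k0 k : ZMod l, ∃ j : ℕ, k = k0 - (j : ZMod l) := by
    intro k0 k
    exact ⟨(k0 - k).val, by rw [ZMod.natCast_rightInverse (k0 - k)]; ring⟩
  -- forward ZW propagation
  have claimF : ∀ k0, v k0 ∈ Z → ∀ k, v k ∈ Z ∧ u k ∈ W := by
    intro k0 hk0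
    have step : ∀ j : ℕ, v (k0 + (j : ZMod l)) ∈ Z := by
      intro j
      induction j with
      | zero => simpa using hk0
      | succ j ih =>
        have h1 : u (k0 + (j : ZMod l) + 1) ∈ W := portZ _ ih
        have h2 := compW _ h1
        have : k0 + ((j + 1 : ℕ) : ZMod l) = k0 + (j : ZMod l) + 1 := by push_cast; ring
        rw [this]
        exact h2
    have hvZ : ∀ k, v k ∈ Z := by
      intro k
      obtain ⟨j, rfl⟩ := hsurjF k0 k
      exact step j
    intro k
    refine ⟨hvZ k, ?_⟩
    have := portZ (k - 1) (hvZ (k - 1))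
    rwa [sub_add_cancel] at this
  -- backward ZW propagation
  have claimB : ∀ k0, u k0 ∈ Z → ∀ k, u k ∈ Z ∧ v k ∈ W := by
    intro k0 hk0
    have step : ∀ j : ℕ, u (k0 - (j : ZMod l)) ∈ Z := by
      intro j
      induction j with
      | zero => simpa using hk0
      | succ j ih =>
        have h1 : u (k0 - (j : ZMod l) - 1 + 1) ∈ Z := by rwa [sub_add_cancel]
        have h2 : v (k0 - (j : ZMod l) - 1) ∈ W := portZback _ h1
        have h3 := compWv _ h2
        have : k0 - ((j + 1 : ℕ) : ZMod l) = k0 - (j : ZMod l) - 1 := by push_cast; ring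
        rw [this]
        exact h3
    have huZ : ∀ k, u k ∈ Z := by
      intro k
      obtain ⟨j, rfl⟩ := hsurjB k0 k
      exact step j
    intro k
    exact ⟨huZ k, portZback k (huZ (k + 1))⟩
  by_cases hZWany : ∃ k, u k ∈ Z ∨ u k ∈ W ∨ v k ∈ Z ∨ v k ∈ W
  · obtain ⟨k0, h | h | h | h⟩ := hZWany
    · exact Or.inr (Or.inr (Or.inl (claimB k0 h)))
    · exact Or.inr (Or.inr (Or.inr (claimF k0 (compW k0 h))))
    · exact Or.inr (Or.inr (Or.inr (claimF k0 h)))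
    · exact Or.inr (Or.inr (Or.inl (claimB k0 (compWv k0 h))))
  · push_neg at hZWany
    rcases hclass _ (huM 0) with h0 | h0 | h0 | h0
    · -- u 0 ∈ X : XY pattern
      left
      have step : ∀ j : ℕ, u ((0 : ZMod l) + (j : ZMod l)) ∈ X ∧
          v ((0 : ZMod l) + (j : ZMod l)) ∈ Y := by
        intro j
        induction j with
        | zero =>
          refine ⟨by simpa using h0, ?_⟩
          have hx := compX _ (show u ((0 : ZMod l) + ((0 : ℕ) : ZMod l)) ∈ X by simpa using h0)
          rcases hclass _ (hvM ((0 : ZMod l) + ((0 : ℕ) : ZMod l))) with h | h | h | h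
          · exact absurd h hx.1
          · exact h
          · exact absurd h (hZWany _).2.2.1
          · exact absurd h hx.2
        | succ j ih =>
          have heq : (0 : ZMod l) + ((j + 1 : ℕ) : ZMod l)
              = (0 : ZMod l) + (j : ZMod l) + 1 := by push_cast; ring
          rw [heq]
          have hy := portY _ ih.2
          have huX : u ((0 : ZMod l) + (j : ZMod l) + 1) ∈ X := by
            rcases hclass _ (huM ((0 : ZMod l) + (j : ZMod l) + 1)) with h | h | h | h
            · exact h
            · exact absurd h hy.1
            · exact absurd h (hZWany _).1
            · exact absurd h (hZWany _).2.1
          refine ⟨huX, ?_⟩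
          have hx := compX _ huX
          rcases hclass _ (hvM ((0 : ZMod l) + (j : ZMod l) + 1)) with h | h | h | h
          · exact absurd h hx.1
          · exact h
          · exact absurd h (hZWany _).2.2.1
          · exact absurd h hx.2
      intro k
      obtain ⟨j, rfl⟩ := hsurjF 0 k
      exact step j
    · -- u 0 ∈ Y : YX pattern
      right; left
      have step : ∀ j : ℕ, u ((0 : ZMod l) + (j : ZMod l)) ∈ Y ∧
          v ((0 : ZMod l) + (j : ZMod l)) ∈ X := by
        intro j
        induction j with
        | zero =>
          refine ⟨by simpa using h0, ?_⟩
          have hx := compY _ (show u ((0 : ZMod l) + ((0 : ℕ) : ZMod l)) ∈ Y by simpa using h0)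
          rcases hclass _ (hvM ((0 : ZMod l) + ((0 : ℕ) : ZMod l))) with h | h | h | h
          · exact h
          · exact absurd h hx.1
          · exact absurd h (hZWany _).2.2.1
          · exact absurd h hx.2
        | succ j ih =>
          have heq : (0 : ZMod l) + ((j + 1 : ℕ) : ZMod l)
              = (0 : ZMod l) + (j : ZMod l) + 1 := by push_cast; ring
          rw [heq]
          have hy := portX _ ih.2
          have huY : u ((0 : ZMod l) + (j : ZMod l) + 1) ∈ Y := by
            rcases hclass _ (huM ((0 : ZMod l) + (j : ZMod l) + 1)) with h | h | h | h
            · exact absurd h hy.1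
            · exact h
            · exact absurd h (hZWany _).1
            · exact absurd h (hZWany _).2.1
          refine ⟨huY, ?_⟩
          have hx := compY _ huY
          rcases hclass _ (hvM ((0 : ZMod l) + (j : ZMod l) + 1)) with h | h | h | h
          · exact h
          · exact absurd h hx.1
          · exact absurd h (hZWany _).2.2.1
          · exact absurd h hx.2
      intro k
      obtain ⟨j, rfl⟩ := hsurjF 0 k
      exact ⟨(step j).2, (step j).1⟩
    · exact absurd h0 (hZWany 0).1
    · exact absurd h0 (hZWany 0).2.1

end Superport
end

section
/- Consider an electrical circuit with exactly two boundary vertices 1 and 2 and prescribed voltages U_1 = 1 and U_2 = 0. Then w(1|2) > 0, and for every ordered pair of vertices k,l the current satisfies I_{kl} · w(1|2) = Σ_{T_{kl}} w(T_{kl}) − Σ_{T_{lk}} w(T_{lk}), where w(1|2) denotes the sum of the weights of all spanning forests with exactly two components such that 1 and 2 lie in different components, and the sums on the right are over all spanning trees T_{kl} (respectively T_{lk}) such that the unique oriented path from 1 to 2 in the tree traverses the edge kl in the direction from k to l (respectively from l to k). -/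
open Finset BigOperators
open scoped Classical

namespace ElecNet

/-- An electrical network with `m` terminals: a finite connected simple graph on `Fin n`
whose boundary vertices are `0, …, m-1`, with symmetric conductances which are positive
exactly on the edges. -/
structure Network where
  n : ℕ
  m : ℕ
  graph : SimpleGraph (Fin n)
  c : Fin n → Fin n → ℝ
  m_pos : 0 < m
  m_le : m ≤ n
  connected : graph.Connected
  c_symm : ∀ k l, c k l = c l k
  c_pos : ∀ k l, graph.Adj k l → 0 < c k l
  c_zero : ∀ k l, ¬ graph.Adj k l → c k l = 0

namespace Network

variable (E : Network)

/-- The type of boundary vertices. -/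
abbrev Bdry := {v : Fin E.n // (v : ℕ) < E.m}

/-- The weight of a subgraph: the product of the conductances of its edges. -/
noncomputable def weight (H : SimpleGraph (Fin E.n)) : ℝ :=
  ∏ e ∈ (Set.toFinite H.edgeSet).toFinset, Sym2.lift ⟨E.c, E.c_symm⟩ e

/-- A spanning forest of the network. -/
def IsSpanningForest (H : SimpleGraph (Fin E.n)) : Prop := H ≤ E.graph ∧ H.IsAcyclic

/-- A valid forest of the electrical network: a spanning forest each of whose components
contains exactly one boundary vertex. -/
def IsValidForest (H : SimpleGraph (Fin E.n)) : Prop :=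
  E.IsSpanningForest H ∧
    ∀ comp : H.ConnectedComponent,
      (Finset.univ.filter
        (fun v : Fin E.n => (v : ℕ) < E.m ∧ H.connectedComponentMk v = comp)).card = 1

/-- `C` is the response matrix of the electrical network: for any voltages and currents
satisfying axioms (C) and (I), the incoming currents at the boundary vertices are obtained
from the prescribed boundary voltages by multiplication by `C`. -/
def IsResponse (C : Matrix E.Bdry E.Bdry ℝ) : Prop :=
  ∀ (Ub : E.Bdry → ℝ) (U : Fin E.n → ℝ) (I : Fin E.n → Fin E.n → ℝ),
    (∀ k l, I k l = E.c k l * (U k - U l)) →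
    (∀ k : Fin E.n, E.m ≤ (k : ℕ) → ∑ l, I k l = 0) →
    (∀ v : E.Bdry, U v.1 = Ub v) →
    ∀ v : E.Bdry, (∑ l, I v.1 l) = ∑ u : E.Bdry, C v u * Ub u

end Network
end ElecNet

namespace ElecNet

section Helpers
open SimpleGraph

variable {V : Type*}

lemma acyclic_mono {G H : SimpleGraph V} (hle : H ≤ G) (hG : G.IsAcyclic) : H.IsAcyclic := by
  intro v c hc
  exact hG (c.mapLe hle) (hc.mapLe hle)

lemma delete_walk_or {G : SimpleGraph V} {a b : V} :
    ∀ {x y : V}, G.Walk x y →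
      (G.deleteEdges {s(a,b)}).Reachable x y ∨
      (G.deleteEdges {s(a,b)}).Reachable x a ∨ (G.deleteEdges {s(a,b)}).Reachable x b := by
  intro x y p
  induction p with
  | nil => exact Or.inl (Reachable.refl _)
  | @cons u z _ h q ih =>
    by_cases he : s(u, z) = s(a, b)
    · rw [Sym2.eq_iff] at he
      rcases he with ⟨rfl, rfl⟩ | ⟨rfl, rfl⟩
      · exact Or.inr (Or.inl (Reachable.refl _))
      · exact Or.inr (Or.inr (Reachable.refl _))
    · have hadj : (G.deleteEdges {s(a,b)}).Adj u z := by simp [h, he]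
      rcases ih with ih | ih | ih
      · exact Or.inl (hadj.reachable.trans ih)
      · exact Or.inr (Or.inl (hadj.reachable.trans ih))
      · exact Or.inr (Or.inr (hadj.reachable.trans ih))

lemma delete_reach_or {G : SimpleGraph V} {a b x : V} (hx : G.Reachable x a) :
    (G.deleteEdges {s(a,b)}).Reachable x a ∨ (G.deleteEdges {s(a,b)}).Reachable x b := by
  obtain ⟨p⟩ := hx
  rcases delete_walk_or p with h | h | h
  · exact Or.inl h
  · exact Or.inl h
  · exact Or.inr h

lemma acyclic_bridge {T : SimpleGraph V} (hT : T.IsAcyclic) {a b : V} (hab : T.Adj a b) :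
    ¬ (T.deleteEdges {s(a,b)}).Reachable a b :=
  ((isAcyclic_iff_forall_adj_isBridge.mp hT) hab)

lemma sup_reach_decomp {H : SimpleGraph V} {k l : V} :
    ∀ {x y : V}, (H ⊔ fromEdgeSet {s(k,l)}).Reachable x y →
      H.Reachable x y ∨
        ((H.Reachable x k ∨ H.Reachable x l) ∧ (H.Reachable y k ∨ H.Reachable y l)) := by
  intro x y hxy
  obtain ⟨p⟩ := hxy
  induction p with
  | nil => exact Or.inl (Reachable.refl _)
  | @cons u z _ h q ih =>
    rcases h with h | h
    · rcases ih with ih | ⟨ihz, ihy⟩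
      · exact Or.inl (Reachable.trans ⟨Walk.cons h Walk.nil⟩ ih)
      · refine Or.inr ⟨?_, ihy⟩
        rcases ihz with hz | hz
        · exact Or.inl (Reachable.trans ⟨Walk.cons h Walk.nil⟩ hz)
        · exact Or.inr (Reachable.trans ⟨Walk.cons h Walk.nil⟩ hz)
    · rw [fromEdgeSet_adj] at h
      have hm : s(u, z) = s(k, l) := by simpa using h.1
      rw [Sym2.eq_iff] at hm
      have hu : H.Reachable u k ∨ H.Reachable u l := by
        rcases hm with ⟨rfl, rfl⟩ | ⟨rfl, rfl⟩
        · exact Or.inl (Reachable.refl _)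
        · exact Or.inr (Reachable.refl _)
      have hz : H.Reachable z k ∨ H.Reachable z l := by
        rcases hm with ⟨rfl, rfl⟩ | ⟨rfl, rfl⟩
        · exact Or.inr (Reachable.refl _)
        · exact Or.inl (Reachable.refl _)
      rcases ih with ih | ⟨_, ihy⟩
      · refine Or.inr ⟨hu, ?_⟩
        rcases hz with h' | h'
        · exact Or.inl (Reachable.trans ih.symm h')
        · exact Or.inr (Reachable.trans ih.symm h')
      · exact Or.inr ⟨hu, ihy⟩

lemma darts_char {T : SimpleGraph V} (hT : T.IsAcyclic) {u v : V} (p : T.Walk u v)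
    (hp : p.IsPath) (k l : V) :
    (k, l) ∈ p.darts.map SimpleGraph.Dart.toProd ↔
      (T.Adj k l ∧ (T.deleteEdges {s(k,l)}).Reachable u k ∧
        (T.deleteEdges {s(k,l)}).Reachable l v) := by
  induction p with
  | nil =>
    simp only [Walk.darts_nil, List.map_nil, List.not_mem_nil, false_iff]
    rintro ⟨hadj, h1, h2⟩
    exact acyclic_bridge hT hadj (h1.symm.trans h2.symm)
  | @cons u x v h q ih =>
    rw [Walk.cons_isPath_iff] at hp
    obtain ⟨hq, hus⟩ := hp
    have hq_edge : s(u, x) ∉ q.edges := fun hmem => hus (q.fst_mem_support_of_mem_edges hmem)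
    constructor
    · intro hmem
      simp only [Walk.darts_cons, List.map_cons, List.mem_cons] at hmem
      rcases hmem with hmem | hmem
      · have hku : k = u := congrArg Prod.fst hmem
        have hlx : l = x := congrArg Prod.snd hmem
        subst hku; subst hlx
        refine ⟨h, Reachable.refl _, ?_⟩
        exact ⟨q.toDeleteEdges _ (fun e he => by
          simp only [Set.mem_singleton_iff]
          rintro rfl; exact hq_edge he)⟩
      · obtain ⟨hadj, h1, h2⟩ := (ih hq).mp hmem
        refine ⟨hadj, ?_, h2⟩
        have hkl_edge : s(k, l) ∈ q.edges := by
          simp only [List.mem_map] at hmem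
          obtain ⟨d, hd, hdp⟩ := hmem
          have hde : d.edge = s(k, l) := by
            show s(d.toProd.1, d.toProd.2) = s(k, l); rw [hdp]
          have := List.mem_map_of_mem (f := SimpleGraph.Dart.edge) hd
          rw [hde] at this
          exact this
        have hne : s(u, x) ≠ s(k, l) := fun hcontra => hq_edge (hcontra ▸ hkl_edge)
        have hadj' : (T.deleteEdges {s(k,l)}).Adj u x := by simp [h, hne]
        exact hadj'.reachable.trans h1
    · rintro ⟨hadj, h1, h2⟩
      simp only [Walk.darts_cons, List.map_cons, List.mem_cons]
      by_cases he : s(u, x) = s(k, l)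
      · rw [Sym2.eq_iff] at he
        rcases he with ⟨rfl, rfl⟩ | ⟨rfl, rfl⟩
        · exact Or.inl rfl
        · exact absurd (h1.symm) (acyclic_bridge hT hadj)
      · have hadj' : (T.deleteEdges {s(k,l)}).Adj u x := by simp [h, he]
        exact Or.inr ((ih hq).mpr ⟨hadj, hadj'.symm.reachable.trans h1, h2⟩)

lemma darts_count_eq [Fintype V] {G : SimpleGraph V} {u v : V} (p : G.Walk u v)
    (hp : p.IsPath) (k : V) (hku : k ≠ u) (hkv : k ≠ v) :
    (Finset.univ.filter (fun l => (k, l) ∈ p.darts.map SimpleGraph.Dart.toProd)).card =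
    (Finset.univ.filter (fun j => (j, k) ∈ p.darts.map SimpleGraph.Dart.toProd)).card := by
  induction p with
  | nil => rfl
  | @cons u x v h q ih =>
    rw [Walk.cons_isPath_iff] at hp
    obtain ⟨hq, hus⟩ := hp
    have hmem_cons : ∀ (a b : V),
        ((a, b) ∈ (Walk.cons h q).darts.map SimpleGraph.Dart.toProd) ↔
        ((a, b) = (u, x) ∨ (a, b) ∈ q.darts.map SimpleGraph.Dart.toProd) := by
      intro a b
      simp [Walk.darts_cons]
    by_cases hkx : k = x
    · subst hkx
      cases q with
      | nil => exact absurd rfl hkv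
      | @cons _ y _ h' r =>
        have hkr : k ∉ r.support := by
          have := hq.support_nodup
          simp only [Walk.support_cons, List.nodup_cons] at this
          exact this.1
        have hmem_cons2 : ∀ (a b : V),
            ((a, b) ∈ (Walk.cons h' r).darts.map SimpleGraph.Dart.toProd) ↔
            ((a, b) = (k, y) ∨ (a, b) ∈ r.darts.map SimpleGraph.Dart.toProd) := by
          intro a b
          simp [Walk.darts_cons]
        have hout : (Finset.univ.filter
            (fun l => (k, l) ∈ (Walk.cons h (Walk.cons h' r)).darts.map
              SimpleGraph.Dart.toProd)) = {y} := by
          ext l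
          simp only [Finset.mem_filter, Finset.mem_univ, true_and, Finset.mem_singleton,
            hmem_cons, hmem_cons2]
          constructor
          · rintro (heq | heq | hmem)
            · exact absurd (congrArg Prod.fst heq) hku
            · exact congrArg Prod.snd heq
            · exfalso
              simp only [List.mem_map] at hmem
              obtain ⟨d, hd, hdp⟩ := hmem
              have : k ∈ r.support := by
                have := r.dart_fst_mem_support_of_mem_darts hd
                rwa [show d.fst = k from congrArg Prod.fst hdp] at this
              exact hkr this
          · rintro rfl
            exact Or.inr (Or.inl rfl)
        have hin : (Finset.univ.filter
            (fun j => (j, k) ∈ (Walk.cons h (Walk.cons h' r)).darts.map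
              SimpleGraph.Dart.toProd)) = {u} := by
          ext j
          simp only [Finset.mem_filter, Finset.mem_univ, true_and, Finset.mem_singleton,
            hmem_cons, hmem_cons2]
          constructor
          · rintro (heq | heq | hmem)
            · exact congrArg Prod.fst heq
            · exact absurd (congrArg Prod.snd heq) h'.ne
            · exfalso
              simp only [List.mem_map] at hmem
              obtain ⟨d, hd, hdp⟩ := hmem
              have : k ∈ r.support := by
                have := r.dart_snd_mem_support_of_mem_darts hd
                rwa [show d.snd = k from congrArg Prod.snd hdp] at this
              exact hkr this
          · rintro rfl
            exact Or.inl rfl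
        rw [hout, hin]
        simp
    · have hout : (Finset.univ.filter
          (fun l => (k, l) ∈ (Walk.cons h q).darts.map SimpleGraph.Dart.toProd)) =
          (Finset.univ.filter (fun l => (k, l) ∈ q.darts.map SimpleGraph.Dart.toProd)) := by
        ext l
        simp only [Finset.mem_filter, Finset.mem_univ, true_and, hmem_cons]
        constructor
        · rintro (heq | hmem)
          · exact absurd (congrArg Prod.fst heq) hku
          · exact hmem
        · exact fun hmem => Or.inr hmem
      have hin : (Finset.univ.filter
          (fun j => (j, k) ∈ (Walk.cons h q).darts.map SimpleGraph.Dart.toProd)) =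
          (Finset.univ.filter (fun j => (j, k) ∈ q.darts.map SimpleGraph.Dart.toProd)) := by
        ext j
        simp only [Finset.mem_filter, Finset.mem_univ, true_and, hmem_cons]
        constructor
        · rintro (heq | hmem)
          · exact absurd (congrArg Prod.snd heq) hkx
          · exact hmem
        · exact fun hmem => Or.inr hmem
      rw [hout, hin]
      exact ih hq hkx hkv

lemma card_cc_eq_two {G : SimpleGraph V} {a b : V} (hab : ¬ G.Reachable a b)
    (hall : ∀ x, G.Reachable x a ∨ G.Reachable x b) :
    Nat.card G.ConnectedComponent = 2 := by
  rw [Nat.card_eq_two_iff]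
  refine ⟨G.connectedComponentMk a, G.connectedComponentMk b, ?_, ?_⟩
  · intro hcontra
    exact hab (ConnectedComponent.exact hcontra)
  · apply Set.eq_univ_of_forall
    intro c
    induction c using ConnectedComponent.ind with
    | _ x =>
      rcases hall x with hx | hx
      · exact Or.inl (ConnectedComponent.sound hx)
      · exact Or.inr (ConnectedComponent.sound hx)

lemma all_reach_of_card_two {G : SimpleGraph V} {a b : V}
    (h2 : Nat.card G.ConnectedComponent = 2) (hab : ¬ G.Reachable a b) :
    ∀ x, G.Reachable x a ∨ G.Reachable x b := by
  rw [Nat.card_eq_two_iff] at h2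
  obtain ⟨c, d, hcd, huniv⟩ := h2
  intro x
  have hmem : ∀ y : G.ConnectedComponent, y = c ∨ y = d := by
    intro y
    have : y ∈ ({c, d} : Set G.ConnectedComponent) := huniv ▸ Set.mem_univ y
    simpa using this
  have hne : G.connectedComponentMk a ≠ G.connectedComponentMk b :=
    fun hcontra => hab (ConnectedComponent.exact hcontra)
  rcases hmem (G.connectedComponentMk x) with hx | hx <;>
    rcases hmem (G.connectedComponentMk a) with ha | ha <;>
      rcases hmem (G.connectedComponentMk b) with hb | hb
  all_goals first
    | (exact absurd (ha.trans hb.symm) hne)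
    | (exact Or.inl (ConnectedComponent.exact (hx.trans ha.symm)))
    | (exact Or.inr (ConnectedComponent.exact (hx.trans hb.symm)))

lemma reach_delete_of_reach {G : SimpleGraph V} {a b : V}
    (hr : (G.deleteEdges {s(a,b)}).Reachable a b) :
    ∀ {x y : V}, G.Reachable x y → (G.deleteEdges {s(a,b)}).Reachable x y := by
  intro x y hxy
  obtain ⟨p⟩ := hxy
  induction p with
  | nil => exact Reachable.refl _
  | @cons u z _ h q ih =>
    refine Reachable.trans ?_ ih
    by_cases he : s(u, z) = s(a, b)
    · rw [Sym2.eq_iff] at he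
      rcases he with ⟨rfl, rfl⟩ | ⟨rfl, rfl⟩
      · exact hr
      · exact hr.symm
    · exact (by simp [h, he] : (G.deleteEdges {s(a,b)}).Adj u z).reachable

lemma exists_spanning_tree_aux [Fintype V] :
    ∀ (N : ℕ) (G : SimpleGraph V), G.Connected → G.edgeSet.ncard ≤ N →
      ∃ T, T ≤ G ∧ T.IsTree := by
  intro N
  induction N with
  | zero =>
    intro G hG _
    by_cases hac : G.IsAcyclic
    · exact ⟨G, le_rfl, hG, hac⟩
    · exfalso
      rw [SimpleGraph.IsAcyclic] at hac
      push_neg at hac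
      obtain ⟨w, c, hc⟩ := hac
      have hne : c.edges ≠ [] := by
        intro hnil
        have := hc.three_le_length
        rw [← Walk.length_edges, hnil] at this
        simp at this
      obtain ⟨e, he⟩ := List.exists_mem_of_ne_nil _ hne
      have heG : e ∈ G.edgeSet := c.edges_subset_edgeSet he
      have : G.edgeSet.ncard = 0 := Nat.le_zero.mp ‹G.edgeSet.ncard ≤ 0›
      rw [Set.ncard_eq_zero (Set.toFinite _)] at this
      rw [this] at heG
      exact heG
  | succ N ihN =>
    intro G hG hcard
    by_cases hac : G.IsAcyclic
    · exact ⟨G, le_rfl, hG, hac⟩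
    · rw [SimpleGraph.IsAcyclic] at hac
      push_neg at hac
      obtain ⟨w, c, hc⟩ := hac
      have hne : c.edges ≠ [] := by
        intro hnil
        have := hc.three_le_length
        rw [← Walk.length_edges, hnil] at this
        simp at this
      obtain ⟨e, he⟩ := List.exists_mem_of_ne_nil _ hne
      induction e with
      | _ aa bb =>
        have heG : s(aa, bb) ∈ G.edgeSet := c.edges_subset_edgeSet he
        have hreach : (G \ fromEdgeSet {s(aa, bb)}).Reachable aa bb :=
          (adj_and_reachable_delete_edges_iff_exists_cycle.mpr ⟨w, c, hc, he⟩).2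
        have hreach' : (G.deleteEdges {s(aa, bb)}).Reachable aa bb := hreach
        have hconn' : (G.deleteEdges {s(aa, bb)}).Connected := by
          rw [connected_iff]
          exact ⟨fun x y => reach_delete_of_reach hreach' (hG.preconnected x y),
            hG.nonempty⟩
        have hcard' : (G.deleteEdges {s(aa, bb)}).edgeSet.ncard ≤ N := by
          rw [edgeSet_deleteEdges]
          have hlt : (G.edgeSet \ {s(aa, bb)}).ncard < G.edgeSet.ncard := by
            exact Set.ncard_diff_singleton_lt_of_mem heG (Set.toFinite _)
          omega
        obtain ⟨T, hTle, hT⟩ := ihN _ hconn' hcard'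
        exact ⟨T, hTle.trans (deleteEdges_le _), hT⟩

lemma exists_spanning_tree [Fintype V] {G : SimpleGraph V} (hG : G.Connected) :
    ∃ T, T ≤ G ∧ T.IsTree :=
  exists_spanning_tree_aux G.edgeSet.ncard G hG le_rfl


end Helpers

namespace Network
variable (E : Network)

lemma weight_pos {H : SimpleGraph (Fin E.n)} (hle : H ≤ E.graph) : 0 < E.weight H := by
  unfold weight
  apply Finset.prod_pos
  intro e he
  rw [Set.Finite.mem_toFinset] at he
  have heG : e ∈ E.graph.edgeSet := SimpleGraph.edgeSet_mono hle he
  induction e with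
  | _ a b =>
    rw [SimpleGraph.mem_edgeSet] at heG
    simpa using E.c_pos a b heG

lemma weight_sup {F : SimpleGraph (Fin E.n)} {k l : Fin E.n} (hne : k ≠ l)
    (hF : ¬ F.Adj k l) :
    E.weight (F ⊔ SimpleGraph.fromEdgeSet {s(k,l)}) = E.c k l * E.weight F := by
  have hset : (F ⊔ SimpleGraph.fromEdgeSet {s(k,l)}).edgeSet = insert s(k,l) F.edgeSet := by
    rw [SimpleGraph.edgeSet_sup, SimpleGraph.edgeSet_fromEdgeSet]
    ext e
    simp only [Set.mem_union, Set.mem_diff, Set.mem_singleton_iff, Set.mem_insert_iff,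
      Set.mem_setOf_eq]
    constructor
    · rintro (he | ⟨rfl, _⟩)
      · exact Or.inr he
      · exact Or.inl rfl
    · rintro (rfl | he)
      · exact Or.inr ⟨rfl, by simp [hne]⟩
      · exact Or.inl he
  have hfin : ((F ⊔ SimpleGraph.fromEdgeSet {s(k,l)}).edgeSet).Finite := Set.toFinite _
  have hfinset : (Set.toFinite (F ⊔ SimpleGraph.fromEdgeSet {s(k,l)}).edgeSet).toFinset =
      insert s(k,l) (Set.toFinite F.edgeSet).toFinset := by
    ext e
    simp only [Set.Finite.mem_toFinset, Finset.mem_insert, hset, Set.mem_insert_iff]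
  unfold weight
  rw [hfinset, Finset.prod_insert (by
    rw [Set.Finite.mem_toFinset, SimpleGraph.mem_edgeSet]; exact hF)]
  simp

lemma sup_delete_cancel {F : SimpleGraph (Fin E.n)} {k l : Fin E.n} (hF : ¬ F.Adj k l) :
    (F ⊔ SimpleGraph.fromEdgeSet {s(k,l)}).deleteEdges {s(k,l)} = F := by
  ext a b
  simp only [SimpleGraph.deleteEdges_adj, SimpleGraph.sup_adj, SimpleGraph.fromEdgeSet_adj,
    Set.mem_singleton_iff]
  constructor
  · rintro ⟨(hab | ⟨hab, _⟩), hne⟩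
    · exact hab
    · exact absurd hab hne
  · intro hab
    refine ⟨Or.inl hab, ?_⟩
    intro heq
    rw [Sym2.eq_iff] at heq
    rcases heq with ⟨rfl, rfl⟩ | ⟨rfl, rfl⟩
    · exact hF hab
    · exact hF hab.symm

lemma delete_sup_cancel {T : SimpleGraph (Fin E.n)} {k l : Fin E.n} (hT : T.Adj k l) :
    (T.deleteEdges {s(k,l)}) ⊔ SimpleGraph.fromEdgeSet {s(k,l)} = T := by
  ext a b
  simp only [SimpleGraph.sup_adj, SimpleGraph.deleteEdges_adj, SimpleGraph.fromEdgeSet_adj,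
    Set.mem_singleton_iff]
  constructor
  · rintro (⟨hab, _⟩ | ⟨heq, _⟩)
    · exact hab
    · rw [Sym2.eq_iff] at heq
      rcases heq with ⟨rfl, rfl⟩ | ⟨rfl, rfl⟩
      · exact hT
      · exact hT.symm
  · intro hab
    by_cases heq : s(a,b) = s(k,l)
    · exact Or.inr ⟨heq, hab.ne⟩
    · exact Or.inl ⟨hab, heq⟩

lemma sepP_iff {H : SimpleGraph (Fin E.n)} {v₀ v₁ : Fin E.n} :
    (E.IsSpanningForest H ∧ Nat.card H.ConnectedComponent = 2 ∧ ¬ H.Reachable v₀ v₁) ↔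
    (H ≤ E.graph ∧ H.IsAcyclic ∧ ¬ H.Reachable v₀ v₁ ∧
      ∀ x, H.Reachable x v₀ ∨ H.Reachable x v₁) := by
  constructor
  · rintro ⟨⟨hle, hac⟩, hcard, hreach⟩
    exact ⟨hle, hac, hreach, all_reach_of_card_two hcard hreach⟩
  · rintro ⟨hle, hac, hreach, hall⟩
    exact ⟨⟨hle, hac⟩, card_cc_eq_two hreach hall, hreach⟩

end Network

namespace Network
open SimpleGraph
variable (E : Network)

lemma tree_sum_eq (v₀ v₁ k l : Fin E.n) (hkl : E.graph.Adj k l) :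
    ∑ T ∈ Finset.univ.filter (fun T => T ≤ E.graph ∧ T.IsTree ∧ T.Adj k l ∧
        (T.deleteEdges {s(k, l)}).Reachable v₀ k ∧
        (T.deleteEdges {s(k, l)}).Reachable l v₁), E.weight T
    = ∑ F ∈ Finset.univ.filter (fun F => (E.IsSpanningForest F ∧
        Nat.card F.ConnectedComponent = 2 ∧ ¬ F.Reachable v₀ v₁) ∧
        F.Reachable v₀ k ∧ F.Reachable l v₁), E.c k l * E.weight F := by
  have hfe_le : fromEdgeSet {s(k, l)} ≤ E.graph := by
    intro a b hab
    rw [fromEdgeSet_adj, Set.mem_singleton_iff, Sym2.eq_iff] at hab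
    rcases hab.1 with ⟨rfl, rfl⟩ | ⟨rfl, rfl⟩
    · exact hkl
    · exact hkl.symm
  symm
  apply Finset.sum_nbij' (i := fun F => F ⊔ fromEdgeSet {s(k, l)})
    (j := fun T => T.deleteEdges {s(k, l)})
  · -- hi : maps into tree filter
    intro F hF
    rw [Finset.mem_filter] at hF ⊢
    obtain ⟨hsepP, hv0k, hlv1⟩ := hF.2
    rw [E.sepP_iff] at hsepP
    obtain ⟨hle, hac, hsep, hall⟩ := hsepP
    have hnr : ¬ F.Reachable k l := fun hr => hsep (hv0k.trans (hr.trans hlv1))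
    have hFadj : ¬ F.Adj k l := fun h => hnr h.reachable
    have hFT : F ≤ F ⊔ fromEdgeSet {s(k, l)} := le_sup_left
    have hTadj : (F ⊔ fromEdgeSet {s(k, l)}).Adj k l :=
      Or.inr (by rw [fromEdgeSet_adj]; exact ⟨rfl, hkl.ne⟩)
    have hreach0 : ∀ x, (F ⊔ fromEdgeSet {s(k, l)}).Reachable x v₀ := by
      intro x
      have hv1v0 : (F ⊔ fromEdgeSet {s(k, l)}).Reachable v₁ v₀ :=
        ((hlv1.mono hFT).symm.trans (hTadj.symm.reachable)).trans
          ((hv0k.mono hFT).symm)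
      rcases hall x with hx | hx
      · exact hx.mono hFT
      · exact (hx.mono hFT).trans hv1v0
    have hconn : (F ⊔ fromEdgeSet {s(k, l)}).Connected := by
      rw [connected_iff]
      exact ⟨fun x y => (hreach0 x).trans (hreach0 y).symm, ⟨v₀⟩⟩
    have hacT : (F ⊔ fromEdgeSet {s(k, l)}).IsAcyclic := by
      rw [isAcyclic_iff_forall_adj_isBridge]
      intro a b hab
      rw [isBridge_iff]
      change ¬ ((F ⊔ fromEdgeSet {s(k, l)}) \ fromEdgeSet {s(a, b)}).Reachable a b
      rcases hab with hab | hab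
      · -- an edge of F
        have hne_e : s(a, b) ≠ s(k, l) := by
          intro heq
          rw [Sym2.eq_iff] at heq
          rcases heq with ⟨rfl, rfl⟩ | ⟨rfl, rfl⟩
          · exact hFadj hab
          · exact hFadj hab.symm
        have hsplit : (F ⊔ fromEdgeSet {s(k, l)}) \ fromEdgeSet {s(a, b)} =
            (F.deleteEdges {s(a, b)}) ⊔ fromEdgeSet {s(k, l)} := by
          ext x y
          simp only [SimpleGraph.sdiff_adj, SimpleGraph.sup_adj, fromEdgeSet_adj,
            SimpleGraph.deleteEdges_adj, Set.mem_singleton_iff]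
          constructor
          · rintro ⟨hxy | hxy, hne⟩
            · exact Or.inl ⟨hxy, fun h => hne ⟨h, hxy.ne⟩⟩
            · exact Or.inr hxy
          · rintro (⟨hxy, hne⟩ | hxy)
            · exact ⟨Or.inl hxy, fun h => hne h.1⟩
            · refine ⟨Or.inr hxy, fun h => hne_e ?_⟩
              rw [← hxy.1, h.1]
          
        intro hreach
        rw [hsplit] at hreach
        have hFbr := acyclic_bridge hac hab
        rcases sup_reach_decomp hreach with hr | ⟨ha, hb⟩
        · exact hFbr hr
        · have hdel_le : F.deleteEdges {s(a, b)} ≤ F := deleteEdges_le _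
          rcases ha with ha | ha <;> rcases hb with hb | hb
          · exact hFbr (ha.trans hb.symm)
          · exact hnr (((ha.mono hdel_le).symm.trans hab.reachable).trans (hb.mono hdel_le))
          · exact hnr (((hb.mono hdel_le).symm.trans hab.symm.reachable).trans
              (ha.mono hdel_le))
          · exact hFbr (ha.trans hb.symm)
      · -- the new edge
        rw [fromEdgeSet_adj, Set.mem_singleton_iff] at hab
        have hdel : (F ⊔ fromEdgeSet {s(k, l)}) \ fromEdgeSet {s(a, b)} = F := by
          rw [hab.1]
          exact E.sup_delete_cancel hFadj
        rw [hdel]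
        intro hreach
        rw [Sym2.eq_iff] at hab
        rcases hab.1 with ⟨rfl, rfl⟩ | ⟨rfl, rfl⟩
        · exact hnr hreach
        · exact hnr hreach.symm
    have hdelT : (F ⊔ fromEdgeSet {s(k, l)}).deleteEdges {s(k, l)} = F :=
      E.sup_delete_cancel hFadj
    refine ⟨Finset.mem_univ _, sup_le hle hfe_le, ⟨hconn, hacT⟩, hTadj, ?_, ?_⟩
    · rw [hdelT]; exact hv0k
    · rw [hdelT]; exact hlv1
  · -- hj : maps back into forest filter
    intro T hT
    rw [Finset.mem_filter] at hT ⊢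
    obtain ⟨hTle, hTtree, hTadj, h1, h2⟩ := hT.2
    have hbr : ¬ (T.deleteEdges {s(k, l)}).Reachable k l :=
      acyclic_bridge hTtree.2 hTadj
    refine ⟨Finset.mem_univ _, ?_, h1, h2⟩
    rw [E.sepP_iff]
    refine ⟨(deleteEdges_le _).trans hTle, acyclic_mono (deleteEdges_le _) hTtree.2, ?_, ?_⟩
    · intro hr
      exact hbr (h1.symm.trans (hr.trans h2.symm))
    · intro x
      rcases delete_reach_or (hTtree.1.preconnected x k) (b := l) with hx | hx
      · exact Or.inl (hx.trans h1.symm)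
      · exact Or.inr (hx.trans h2)
  · -- left inverse
    intro F hF
    rw [Finset.mem_filter] at hF
    obtain ⟨hsepP, hv0k, hlv1⟩ := hF.2
    rw [E.sepP_iff] at hsepP
    have hFadj : ¬ F.Adj k l := fun h =>
      hsepP.2.2.1 (hv0k.trans (h.reachable.trans hlv1))
    exact E.sup_delete_cancel hFadj
  · -- right inverse
    intro T hT
    rw [Finset.mem_filter] at hT
    exact E.delete_sup_cancel hT.2.2.2.1
  · -- weights
    intro F hF
    rw [Finset.mem_filter] at hF
    obtain ⟨hsepP, hv0k, hlv1⟩ := hF.2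
    rw [E.sepP_iff] at hsepP
    have hFadj : ¬ F.Adj k l := fun h =>
      hsepP.2.2.1 (hv0k.trans (h.reachable.trans hlv1))
    exact (E.weight_sup hkl.ne hFadj).symm

end Network
namespace Network
variable (E : Network)

lemma c_nonneg (k l : Fin E.n) : 0 ≤ E.c k l := by
  by_cases h : E.graph.Adj k l
  · exact (E.c_pos k l h).le
  · rw [E.c_zero k l h]

lemma harmonic_unique (f : Fin E.n → ℝ)
    (hbd : ∀ k : Fin E.n, (k : ℕ) < E.m → f k = 0)
    (hint : ∀ k : Fin E.n, E.m ≤ (k : ℕ) → ∑ l, E.c k l * (f k - f l) = 0) :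
    ∀ x, f x = 0 := by
  have hflux : ∀ k : Fin E.n, f k * ∑ l, E.c k l * (f k - f l) = 0 := by
    intro k
    rcases lt_or_ge (k : ℕ) E.m with h | h
    · rw [hbd k h, zero_mul]
    · rw [hint k h, mul_zero]
  set Q : ℝ := ∑ k, ∑ l, E.c k l * (f k - f l) * f k with hQ
  have hQ0 : Q = 0 := by
    rw [hQ]
    have : ∀ k : Fin E.n, ∑ l, E.c k l * (f k - f l) * f k
        = f k * ∑ l, E.c k l * (f k - f l) := by
      intro k
      rw [Finset.mul_sum]
      exact Finset.sum_congr rfl fun l _ => by ring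
    rw [Finset.sum_congr rfl fun k _ => this k]
    rw [Finset.sum_congr rfl fun k _ => hflux k]
    simp
  have hswap : ∑ k, ∑ l, E.c k l * (f k - f l) * f l = -Q := by
    have this1 : ∀ a b : Fin E.n, E.c b a * (f b - f a) * f a
        = -(E.c a b * (f a - f b) * f a) := by
      intro a b
      rw [E.c_symm b a]
      ring
    calc ∑ k, ∑ l, E.c k l * (f k - f l) * f l
        = ∑ l, ∑ k, E.c k l * (f k - f l) * f l := Finset.sum_comm
      _ = ∑ l, ∑ k, -(E.c l k * (f l - f k) * f l) :=
          Finset.sum_congr rfl fun l _ => Finset.sum_congr rfl fun k _ => this1 l k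
      _ = -∑ l, ∑ k, E.c l k * (f l - f k) * f l := by
          simp [← Finset.sum_neg_distrib]
      _ = -Q := by rw [hQ]
  have henergy : ∑ k, ∑ l, E.c k l * (f k - f l) ^ 2 = 0 := by
    have expand : ∀ k l : Fin E.n, E.c k l * (f k - f l) ^ 2
        = E.c k l * (f k - f l) * f k - E.c k l * (f k - f l) * f l := by
      intro k l; ring
    rw [Finset.sum_congr rfl fun k _ => Finset.sum_congr rfl fun l _ => expand k l]
    rw [Finset.sum_congr rfl fun k _ => Finset.sum_sub_distrib _ _]
    rw [Finset.sum_sub_distrib, hswap, ← hQ, hQ0]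
    ring
  have hterm : ∀ k l : Fin E.n, E.c k l * (f k - f l) ^ 2 = 0 := by
    have houter := (Finset.sum_eq_zero_iff_of_nonneg (fun k _ =>
      Finset.sum_nonneg fun l _ => mul_nonneg (E.c_nonneg k l) (sq_nonneg _))).mp henergy
    intro k l
    have hinner := (Finset.sum_eq_zero_iff_of_nonneg (fun l _ =>
      mul_nonneg (E.c_nonneg k l) (sq_nonneg _))).mp (houter k (Finset.mem_univ k))
    exact hinner l (Finset.mem_univ l)
  have hadj : ∀ k l : Fin E.n, E.graph.Adj k l → f k = f l := by
    intro k l h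
    have := hterm k l
    rcases mul_eq_zero.mp this with hc | hsq
    · exact absurd hc (ne_of_gt (E.c_pos k l h))
    · have := pow_eq_zero_iff (n := 2) (by norm_num) |>.mp hsq
      linarith [sub_eq_zero.mp this]
  have hwalk : ∀ {x y : Fin E.n}, E.graph.Walk x y → f x = f y := by
    intro x y p
    induction p with
    | nil => rfl
    | cons h _ ih => exact (hadj _ _ h).trans ih
  have hb0 : (0 : ℕ) < E.n := lt_of_lt_of_le E.m_pos E.m_le
  set b0 : Fin E.n := ⟨0, hb0⟩ with hb0def
  have hfb0 : f b0 = 0 := hbd b0 E.m_pos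
  intro x
  obtain ⟨p⟩ := E.connected.preconnected x b0
  rw [hwalk p, hfb0]

end Network

namespace Network
open SimpleGraph
variable (E : Network)

lemma harmonic_S (v₀ v₁ k : Fin E.n) (hk0 : k ≠ v₀) (hk1 : k ≠ v₁) :
    ∑ l, (∑ T ∈ Finset.univ.filter (fun T => T ≤ E.graph ∧ T.IsTree ∧ T.Adj k l ∧
        (T.deleteEdges {s(k, l)}).Reachable v₀ k ∧
        (T.deleteEdges {s(k, l)}).Reachable l v₁), E.weight T)
    = ∑ l, (∑ T ∈ Finset.univ.filter (fun T => T ≤ E.graph ∧ T.IsTree ∧ T.Adj l k ∧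
        (T.deleteEdges {s(l, k)}).Reachable v₀ l ∧
        (T.deleteEdges {s(l, k)}).Reachable k v₁), E.weight T) := by
  simp only [Finset.sum_filter]
  rw [Finset.sum_comm (γ := Fin E.n), Finset.sum_comm (γ := Fin E.n)]
  apply Finset.sum_congr rfl
  intro T _
  by_cases hT : T ≤ E.graph ∧ T.IsTree
  · obtain ⟨wk⟩ := hT.2.isConnected.preconnected v₀ v₁
    set q : T.Path v₀ v₁ := wk.toPath with hqdef
    have hchar1 : ∀ l, (T.Adj k l ∧ (T.deleteEdges {s(k, l)}).Reachable v₀ k ∧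
        (T.deleteEdges {s(k, l)}).Reachable l v₁) ↔
        (k, l) ∈ (q : T.Walk v₀ v₁).darts.map SimpleGraph.Dart.toProd := fun l =>
      (darts_char hT.2.IsAcyclic (q : T.Walk v₀ v₁) q.2 k l).symm
    have hchar2 : ∀ l, (T.Adj l k ∧ (T.deleteEdges {s(l, k)}).Reachable v₀ l ∧
        (T.deleteEdges {s(l, k)}).Reachable k v₁) ↔
        (l, k) ∈ (q : T.Walk v₀ v₁).darts.map SimpleGraph.Dart.toProd := fun l =>
      (darts_char hT.2.IsAcyclic (q : T.Walk v₀ v₁) q.2 l k).symm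
    have step1 : ∀ l, (if T ≤ E.graph ∧ T.IsTree ∧ T.Adj k l ∧
        (T.deleteEdges {s(k, l)}).Reachable v₀ k ∧
        (T.deleteEdges {s(k, l)}).Reachable l v₁ then E.weight T else 0)
        = (if (k, l) ∈ (q : T.Walk v₀ v₁).darts.map SimpleGraph.Dart.toProd
            then E.weight T else 0) := by
      intro l
      refine if_congr ?_ rfl rfl
      rw [← hchar1 l]
      exact ⟨fun h => h.2.2, fun h => ⟨hT.1, hT.2, h⟩⟩
    have step2 : ∀ l, (if T ≤ E.graph ∧ T.IsTree ∧ T.Adj l k ∧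
        (T.deleteEdges {s(l, k)}).Reachable v₀ l ∧
        (T.deleteEdges {s(l, k)}).Reachable k v₁ then E.weight T else 0)
        = (if (l, k) ∈ (q : T.Walk v₀ v₁).darts.map SimpleGraph.Dart.toProd
            then E.weight T else 0) := by
      intro l
      refine if_congr ?_ rfl rfl
      rw [← hchar2 l]
      exact ⟨fun h => h.2.2, fun h => ⟨hT.1, hT.2, h⟩⟩
    rw [Finset.sum_congr rfl fun l _ => step1 l, Finset.sum_congr rfl fun l _ => step2 l]
    rw [← Finset.sum_filter, ← Finset.sum_filter, Finset.sum_const, Finset.sum_const]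
    have hcount := darts_count_eq (q : T.Walk v₀ v₁) q.2 k hk0 hk1
    congr 1
    convert hcount using 2 <;> (ext x; simp)
  · have hfalse1 : ∀ l, ¬(T ≤ E.graph ∧ T.IsTree ∧ T.Adj k l ∧
        (T.deleteEdges {s(k, l)}).Reachable v₀ k ∧
        (T.deleteEdges {s(k, l)}).Reachable l v₁) := by
      intro l hcon
      exact hT ⟨hcon.1, hcon.2.1⟩
    have hfalse2 : ∀ l, ¬(T ≤ E.graph ∧ T.IsTree ∧ T.Adj l k ∧
        (T.deleteEdges {s(l, k)}).Reachable v₀ l ∧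
        (T.deleteEdges {s(l, k)}).Reachable k v₁) := by
      intro l hcon
      exact hT ⟨hcon.1, hcon.2.1⟩
    rw [Finset.sum_congr rfl fun l _ => if_neg (hfalse1 l),
      Finset.sum_congr rfl fun l _ => if_neg (hfalse2 l)]

end Network

namespace Network
open SimpleGraph
variable (E : Network)

lemma key_formula (v₀ v₁ k l : Fin E.n) :
    E.c k l *
      ((∑ F ∈ Finset.univ.filter (fun F => (E.IsSpanningForest F ∧
          Nat.card F.ConnectedComponent = 2 ∧ ¬ F.Reachable v₀ v₁) ∧
          F.Reachable v₀ k), E.weight F) -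
       (∑ F ∈ Finset.univ.filter (fun F => (E.IsSpanningForest F ∧
          Nat.card F.ConnectedComponent = 2 ∧ ¬ F.Reachable v₀ v₁) ∧
          F.Reachable v₀ l), E.weight F))
    = (∑ T ∈ Finset.univ.filter (fun T => T ≤ E.graph ∧ T.IsTree ∧ T.Adj k l ∧
        (T.deleteEdges {s(k, l)}).Reachable v₀ k ∧
        (T.deleteEdges {s(k, l)}).Reachable l v₁), E.weight T)
      - (∑ T ∈ Finset.univ.filter (fun T => T ≤ E.graph ∧ T.IsTree ∧ T.Adj l k ∧
        (T.deleteEdges {s(l, k)}).Reachable v₀ l ∧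
        (T.deleteEdges {s(l, k)}).Reachable k v₁), E.weight T) := by
  by_cases hkl : E.graph.Adj k l
  · have h1 := E.tree_sum_eq v₀ v₁ k l hkl
    have h2 := E.tree_sum_eq v₀ v₁ l k hkl.symm
    rw [h1, h2]
    set sepP : SimpleGraph (Fin E.n) → Prop := fun F => E.IsSpanningForest F ∧
      Nat.card F.ConnectedComponent = 2 ∧ ¬ F.Reachable v₀ v₁ with hsepPdef
    have hxor : ∀ F, sepP F → ∀ a : Fin E.n,
        (F.Reachable a v₁ ↔ ¬ F.Reachable v₀ a) := by
      intro F hF a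
      rw [hsepPdef] at hF
      rw [E.sepP_iff] at hF
      obtain ⟨-, -, hsep, hall⟩ := hF
      constructor
      · intro h1' h2'
        exact hsep (h2'.trans h1')
      · intro h
        rcases hall a with ha | ha
        · exact absurd ha.symm h
        · exact ha
    have hsplit : ∀ (a b : Fin E.n),
        Finset.univ.filter (fun F => sepP F ∧ F.Reachable v₀ a) =
          (Finset.univ.filter (fun F => sepP F ∧ F.Reachable v₀ a ∧ F.Reachable b v₁)) ∪
          (Finset.univ.filter (fun F => sepP F ∧ F.Reachable v₀ a ∧ F.Reachable v₀ b)) := by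
      intro a b
      ext F
      simp only [Finset.mem_filter, Finset.mem_union, Finset.mem_univ, true_and]
      constructor
      · rintro ⟨hs, ha⟩
        by_cases hb : F.Reachable v₀ b
        · exact Or.inr ⟨hs, ha, hb⟩
        · exact Or.inl ⟨hs, ha, (hxor F hs b).mpr hb⟩
      · rintro (⟨hs, ha, -⟩ | ⟨hs, ha, -⟩) <;> exact ⟨hs, ha⟩
    have hdisj : ∀ (a b : Fin E.n),
        Disjoint (Finset.univ.filter (fun F => sepP F ∧ F.Reachable v₀ a ∧ F.Reachable b v₁))
          (Finset.univ.filter (fun F => sepP F ∧ F.Reachable v₀ a ∧ F.Reachable v₀ b)) := by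
      intro a b
      rw [Finset.disjoint_filter]
      rintro F - ⟨hs, -, hb⟩ ⟨-, -, hb'⟩
      exact ((hxor F hs b).mp hb) hb'
    have hBeq : (Finset.univ.filter (fun F => sepP F ∧ F.Reachable v₀ k ∧ F.Reachable v₀ l)) =
        (Finset.univ.filter (fun F => sepP F ∧ F.Reachable v₀ l ∧ F.Reachable v₀ k)) := by
      ext F
      simp only [Finset.mem_filter]
      tauto
    have hNk := congrArg (fun t => ∑ F ∈ t, E.c k l * E.weight F) (hsplit k l)
    have hNl := congrArg (fun t => ∑ F ∈ t, E.c k l * E.weight F) (hsplit l k)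
    rw [Finset.sum_union (hdisj k l)] at hNk
    rw [Finset.sum_union (hdisj l k)] at hNl
    rw [mul_sub, Finset.mul_sum, Finset.mul_sum, hNk, hNl, hBeq]
    have hclk : ∀ F : SimpleGraph (Fin E.n), E.c l k * E.weight F = E.c k l * E.weight F := by
      intro F
      rw [E.c_symm l k]
    rw [Finset.sum_congr rfl fun F _ => hclk F]
    ring
  · have hc0 : E.c k l = 0 := E.c_zero k l hkl
    have hS1 : (Finset.univ.filter (fun T => T ≤ E.graph ∧ T.IsTree ∧ T.Adj k l ∧
        (T.deleteEdges {s(k, l)}).Reachable v₀ k ∧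
        (T.deleteEdges {s(k, l)}).Reachable l v₁)) = ∅ := by
      rw [Finset.filter_eq_empty_iff]
      rintro T - ⟨hle, -, hadj, -⟩
      exact hkl (hle hadj)
    have hS2 : (Finset.univ.filter (fun T => T ≤ E.graph ∧ T.IsTree ∧ T.Adj l k ∧
        (T.deleteEdges {s(l, k)}).Reachable v₀ l ∧
        (T.deleteEdges {s(l, k)}).Reachable k v₁)) = ∅ := by
      rw [Finset.filter_eq_empty_iff]
      rintro T - ⟨hle, -, hadj, -⟩
      exact hkl (hle hadj).symm
    rw [hc0, hS1, hS2]
    simp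

end Network


/-- **Combinatorial formula for the currents in a two-terminal electrical circuit**
(Proposition 2.7(2)).  Let the boundary vertices be `v₀` ("1") and `v₁` ("2") with
prescribed voltages `1` and `0`.  Then `w(1|2) > 0` and for every ordered pair of vertices
`k, l`, `I k l · w(1|2) = Σ_{T_{kl}} w(T_{kl}) − Σ_{T_{lk}} w(T_{lk})`, where the sums are
over all spanning trees whose oriented path from `v₀` to `v₁` traverses the edge `kl` in
the direction from `k` to `l` (respectively from `l` to `k`): that is, trees `T`
containing the edge `kl` such that after its deletion `v₀` is joined to `k` and `l` is
joined to `v₁` (respectively `v₀` to `l` and `k` to `v₁`). -/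
theorem current_two_terminal (E : Network) (h2 : E.m = 2)
    (U : Fin E.n → ℝ) (I : Fin E.n → Fin E.n → ℝ)
    (hOhm : ∀ k l, I k l = E.c k l * (U k - U l))
    (hKir : ∀ k : Fin E.n, E.m ≤ (k : ℕ) → ∑ l, I k l = 0) :
    ∀ v₀ v₁ : Fin E.n, (v₀ : ℕ) = 0 → (v₁ : ℕ) = 1 → U v₀ = 1 → U v₁ = 0 →
      (0 < ∑ H ∈ Finset.univ.filter (fun H => E.IsSpanningForest H ∧
            Nat.card H.ConnectedComponent = 2 ∧ ¬ H.Reachable v₀ v₁), E.weight H) ∧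
      ∀ k l : Fin E.n,
        I k l * (∑ H ∈ Finset.univ.filter (fun H => E.IsSpanningForest H ∧
            Nat.card H.ConnectedComponent = 2 ∧ ¬ H.Reachable v₀ v₁), E.weight H)
        = (∑ T ∈ Finset.univ.filter (fun T => T ≤ E.graph ∧ T.IsTree ∧ T.Adj k l ∧
              (T.deleteEdges {s(k, l)}).Reachable v₀ k ∧
              (T.deleteEdges {s(k, l)}).Reachable l v₁), E.weight T)
          - (∑ T ∈ Finset.univ.filter (fun T => T ≤ E.graph ∧ T.IsTree ∧ T.Adj k l ∧
              (T.deleteEdges {s(k, l)}).Reachable v₀ l ∧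
              (T.deleteEdges {s(k, l)}).Reachable k v₁), E.weight T) := by
  intro v₀ v₁ hv0 hv1 hU0 hU1
  have hv01 : v₀ ≠ v₁ := by
    intro h
    rw [h, hv1] at hv0
    exact one_ne_zero hv0
  -- Part 1 : positivity
  have hpos : 0 < ∑ H ∈ Finset.univ.filter (fun H => E.IsSpanningForest H ∧
      Nat.card H.ConnectedComponent = 2 ∧ ¬ H.Reachable v₀ v₁), E.weight H := by
    obtain ⟨T, hTle, hTtree⟩ := exists_spanning_tree E.connected
    obtain ⟨wk⟩ := hTtree.isConnected.preconnected v₀ v₁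
    obtain ⟨pw, hpw⟩ : ∃ pw : T.Walk v₀ v₁, pw.IsPath := ⟨wk.toPath, wk.toPath.2⟩
    cases pw with
    | nil => exact absurd rfl hv01
    | @cons _ x _ h q =>
      rw [SimpleGraph.Walk.cons_isPath_iff] at hpw
      obtain ⟨hqpath, hv0s⟩ := hpw
      have hqe : ∀ e ∈ q.edges, e ∉ ({s(v₀, x)} : Set (Sym2 (Fin E.n))) := by
        intro e he hmem
        rw [Set.mem_singleton_iff] at hmem
        subst hmem
        exact hv0s (q.fst_mem_support_of_mem_edges he)
      have hq' : (T.deleteEdges {s(v₀, x)}).Reachable x v₁ := ⟨q.toDeleteEdges _ hqe⟩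
      have hbr : ¬ (T.deleteEdges {s(v₀, x)}).Reachable v₀ x :=
        acyclic_bridge hTtree.IsAcyclic h
      have hnr : ¬ (T.deleteEdges {s(v₀, x)}).Reachable v₀ v₁ :=
        fun hr => hbr (hr.trans hq'.symm)
      have hall : ∀ y, (T.deleteEdges {s(v₀, x)}).Reachable y v₀ ∨
          (T.deleteEdges {s(v₀, x)}).Reachable y v₁ := by
        intro y
        rcases delete_reach_or (hTtree.isConnected.preconnected y v₀) (b := x) with hy | hy
        · exact Or.inl hy
        · exact Or.inr (hy.trans hq')
      have hmem : T.deleteEdges {s(v₀, x)} ∈ Finset.univ.filter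
          (fun H => E.IsSpanningForest H ∧ Nat.card H.ConnectedComponent = 2 ∧
            ¬ H.Reachable v₀ v₁) := by
        rw [Finset.mem_filter]
        exact ⟨Finset.mem_univ _, (E.sepP_iff).mpr
          ⟨(SimpleGraph.deleteEdges_le _).trans hTle,
            acyclic_mono (SimpleGraph.deleteEdges_le _) hTtree.IsAcyclic, hnr, hall⟩⟩
      exact Finset.sum_pos (fun H hH => E.weight_pos
        ((E.sepP_iff.mp (Finset.mem_filter.mp hH).2).1)) ⟨_, hmem⟩
  refine ⟨hpos, ?_⟩
  -- the harmonic function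
  have hNv0 : (∑ F ∈ Finset.univ.filter (fun F => (E.IsSpanningForest F ∧
      Nat.card F.ConnectedComponent = 2 ∧ ¬ F.Reachable v₀ v₁) ∧
      F.Reachable v₀ v₀), E.weight F)
      = ∑ H ∈ Finset.univ.filter (fun H => E.IsSpanningForest H ∧
        Nat.card H.ConnectedComponent = 2 ∧ ¬ H.Reachable v₀ v₁), E.weight H := by
    apply Finset.sum_congr _ (fun _ _ => rfl)
    ext F
    simp only [Finset.mem_filter, Finset.mem_univ, true_and]
    exact ⟨fun h => h.1, fun h => ⟨h, SimpleGraph.Reachable.refl _⟩⟩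
  have hNv1 : (∑ F ∈ Finset.univ.filter (fun F => (E.IsSpanningForest F ∧
      Nat.card F.ConnectedComponent = 2 ∧ ¬ F.Reachable v₀ v₁) ∧
      F.Reachable v₀ v₁), E.weight F) = 0 := by
    rw [Finset.filter_eq_empty_iff.mpr, Finset.sum_empty]
    rintro F - ⟨⟨-, -, hnr⟩, hr⟩
    exact hnr hr
  have hUD : ∀ z : Fin E.n, U z * (∑ H ∈ Finset.univ.filter
      (fun H => E.IsSpanningForest H ∧ Nat.card H.ConnectedComponent = 2 ∧
        ¬ H.Reachable v₀ v₁), E.weight H)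
      = ∑ F ∈ Finset.univ.filter (fun F => (E.IsSpanningForest F ∧
          Nat.card F.ConnectedComponent = 2 ∧ ¬ F.Reachable v₀ v₁) ∧
          F.Reachable v₀ z), E.weight F := by
    have := E.harmonic_unique (f := fun z => U z * (∑ H ∈ Finset.univ.filter
        (fun H => E.IsSpanningForest H ∧ Nat.card H.ConnectedComponent = 2 ∧
          ¬ H.Reachable v₀ v₁), E.weight H)
        - ∑ F ∈ Finset.univ.filter (fun F => (E.IsSpanningForest F ∧
            Nat.card F.ConnectedComponent = 2 ∧ ¬ F.Reachable v₀ v₁) ∧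
            F.Reachable v₀ z), E.weight F) ?_ ?_
    · intro z
      have hz := this z
      simp only [sub_eq_zero] at hz
      exact hz
    · -- boundary
      intro z hz
      beta_reduce
      rw [h2] at hz
      have hz' : (z : ℕ) = 0 ∨ (z : ℕ) = 1 := by omega
      rcases hz' with hz' | hz'
      · have : z = v₀ := Fin.ext (by rw [hv0, hz'])
        subst this
        rw [hU0, hNv0]
        ring
      · have : z = v₁ := Fin.ext (by rw [hv1, hz'])
        subst this
        rw [hU1, hNv1]
        ring
    · -- interior
      intro z hz
      have hz0 : z ≠ v₀ := by
        intro h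
        rw [h, hv0, h2] at hz
        omega
      have hz1 : z ≠ v₁ := by
        intro h
        rw [h, hv1, h2] at hz
        omega
      have hsplit : ∀ l : Fin E.n,
          E.c z l * ((fun y => U y * (∑ H ∈ Finset.univ.filter
            (fun H => E.IsSpanningForest H ∧ Nat.card H.ConnectedComponent = 2 ∧
              ¬ H.Reachable v₀ v₁), E.weight H)
            - ∑ F ∈ Finset.univ.filter (fun F => (E.IsSpanningForest F ∧
                Nat.card F.ConnectedComponent = 2 ∧ ¬ F.Reachable v₀ v₁) ∧
                F.Reachable v₀ y), E.weight F) z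
            - (fun y => U y * (∑ H ∈ Finset.univ.filter
            (fun H => E.IsSpanningForest H ∧ Nat.card H.ConnectedComponent = 2 ∧
              ¬ H.Reachable v₀ v₁), E.weight H)
            - ∑ F ∈ Finset.univ.filter (fun F => (E.IsSpanningForest F ∧
                Nat.card F.ConnectedComponent = 2 ∧ ¬ F.Reachable v₀ v₁) ∧
                F.Reachable v₀ y), E.weight F) l)
          = (E.c z l * (U z - U l)) * (∑ H ∈ Finset.univ.filter
            (fun H => E.IsSpanningForest H ∧ Nat.card H.ConnectedComponent = 2 ∧
              ¬ H.Reachable v₀ v₁), E.weight H)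
            - E.c z l * ((∑ F ∈ Finset.univ.filter (fun F => (E.IsSpanningForest F ∧
                Nat.card F.ConnectedComponent = 2 ∧ ¬ F.Reachable v₀ v₁) ∧
                F.Reachable v₀ z), E.weight F)
              - (∑ F ∈ Finset.univ.filter (fun F => (E.IsSpanningForest F ∧
                Nat.card F.ConnectedComponent = 2 ∧ ¬ F.Reachable v₀ v₁) ∧
                F.Reachable v₀ l), E.weight F)) := by
        intro l
        simp only
        ring
      rw [Finset.sum_congr rfl fun l _ => hsplit l, Finset.sum_sub_distrib,
        ← Finset.sum_mul]
      have hKz : ∑ l, E.c z l * (U z - U l) = 0 := by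
        rw [← hKir z hz]
        exact Finset.sum_congr rfl fun l _ => (hOhm z l).symm
      rw [hKz, zero_mul, zero_sub, neg_eq_zero]
      rw [Finset.sum_congr rfl fun l _ => E.key_formula v₀ v₁ z l,
        Finset.sum_sub_distrib]
      rw [E.harmonic_S v₀ v₁ z hz0 hz1]
      ring
  -- final formula
  intro k l
  have hsetswap : (Finset.univ.filter (fun T => T ≤ E.graph ∧ T.IsTree ∧ T.Adj k l ∧
      (T.deleteEdges {s(k, l)}).Reachable v₀ l ∧
      (T.deleteEdges {s(k, l)}).Reachable k v₁))
      = (Finset.univ.filter (fun T => T ≤ E.graph ∧ T.IsTree ∧ T.Adj l k ∧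
      (T.deleteEdges {s(l, k)}).Reachable v₀ l ∧
      (T.deleteEdges {s(l, k)}).Reachable k v₁)) := by
    have he : s(k, l) = s(l, k) := Sym2.eq_swap
    ext T
    simp only [Finset.mem_filter, Finset.mem_univ, true_and, he]
    constructor
    · rintro ⟨h1', h2', h3', h4', h5'⟩
      exact ⟨h1', h2', h3'.symm, h4', h5'⟩
    · rintro ⟨h1', h2', h3', h4', h5'⟩
      exact ⟨h1', h2', h3'.symm, h4', h5'⟩
  rw [hsetswap, hOhm k l, ← E.key_formula v₀ v₁ k l, ← hUD k, ← hUD l]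
  ring


end ElecNet
end
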